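/- Let H be a 3-uniform hypergraph containing a vertex a1 of degree exactly 2 whose two hyperedges are {a1,a2,x1} and {a1,a3,x1} with a2 ≠ a3, where d(a2) = d(a3) = 2 and {a1,a2,a3} is not a hyperedge. If H is Berge-K4-free, then adding the hyperedge {a1,a2,a3} does not create a Berge-K4 containing a1 in its core; in particular, if moreover H is Berge-K4-saturated then the pair (a2,a3) must be good. -/
import Mathlib


variable {V : Type*} [DecidableEq V]

/-- A Berge-K4 in the hyperedge set `E` with core vertices `a,b,c,d`:
four distinct vertices together with six distinct hyperedges, one assigned
to each pair of core vertices, each containing its assigned pair. -/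
def IsBergeK4Core (E : Finset (Finset V)) (a b c d : V) : Prop :=
  a ≠ b ∧ a ≠ c ∧ a ≠ d ∧ b ≠ c ∧ b ≠ d ∧ c ≠ d ∧
  ∃ fab fac fad fbc fbd fcd : Finset V,
    fab ∈ E ∧ fac ∈ E ∧ fad ∈ E ∧ fbc ∈ E ∧ fbd ∈ E ∧ fcd ∈ E ∧
    ([fab, fac, fad, fbc, fbd, fcd] : List (Finset V)).Nodup ∧
    a ∈ fab ∧ b ∈ fab ∧ a ∈ fac ∧ c ∈ fac ∧ a ∈ fad ∧ d ∈ fad ∧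
    b ∈ fbc ∧ c ∈ fbc ∧ b ∈ fbd ∧ d ∈ fbd ∧ c ∈ fcd ∧ d ∈ fcd

/-- `E` contains a Berge-K4. -/
def IsBergeK4 (E : Finset (Finset V)) : Prop :=
  ∃ a b c d : V, IsBergeK4Core E a b c d

/-- Every hyperedge has exactly 3 vertices. -/
def Is3Uniform (E : Finset (Finset V)) : Prop := ∀ e ∈ E, e.card = 3

/-- The degree of a vertex: the number of hyperedges containing it. -/
def hdeg (E : Finset (Finset V)) (v : V) : ℕ := (E.filter fun e => v ∈ e).card

/-- A 3-uniform Berge-K4-saturated hypergraph on the (finite) vertex type `V`: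
it is 3-uniform, Berge-K4-free, and adding any non-hyperedge (3-element subset
of the vertices not already a hyperedge) creates a Berge-K4. -/
def IsSaturated [Fintype V] (E : Finset (Finset V)) : Prop :=
  Is3Uniform E ∧ ¬ IsBergeK4 E ∧
    ∀ e : Finset V, e.card = 3 → e ∉ E → IsBergeK4 (insert e E)

/-- The pair `(u,v)` is good: there are two further vertices `x,y` (so that
`u,v,x,y` are four distinct vertices) and five distinct hyperedges, one for
each pair among `u,v,x,y` other than `uv`, each containing its assigned pair;
i.e. adding an edge on `{u,v}` completes a Berge-K4 with core `{u,v,x,y}`. -/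
def GoodPair (E : Finset (Finset V)) (u v : V) : Prop :=
  ∃ x y : V, u ≠ v ∧ u ≠ x ∧ u ≠ y ∧ v ≠ x ∧ v ≠ y ∧ x ≠ y ∧
  ∃ eux euy evx evy exy : Finset V,
    eux ∈ E ∧ euy ∈ E ∧ evx ∈ E ∧ evy ∈ E ∧ exy ∈ E ∧
    ([eux, euy, evx, evy, exy] : List (Finset V)).Nodup ∧
    u ∈ eux ∧ x ∈ eux ∧ u ∈ euy ∧ y ∈ euy ∧
    v ∈ evx ∧ x ∈ evx ∧ v ∈ evy ∧ y ∈ evy ∧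
    x ∈ exy ∧ y ∈ exy
set_option linter.unusedSectionVars false
lemma core_swap_ab {E : Finset (Finset V)} {a b c d : V}
    (h : IsBergeK4Core E a b c d) : IsBergeK4Core E b a c d := by
  obtain ⟨h1,h2,h3,h4,h5,h6, fab,fac,fad,fbc,fbd,fcd, m1,m2,m3,m4,m5,m6, nd,
    p1,p2,p3,p4,p5,p6,p7,p8,p9,p10,p11,p12⟩ := h
  refine ⟨h1.symm, h4, h5, h2, h3, h6, fab, fbc, fbd, fac, fad, fcd,
    m1,m4,m5,m2,m3,m6, ?_, p2,p1,p7,p8,p9,p10,p3,p4,p5,p6,p11,p12⟩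
  simp only [List.nodup_cons, List.mem_cons, List.mem_singleton, List.not_mem_nil,
    List.nodup_nil, not_or, and_true] at nd ⊢
  aesop

lemma core_swap_bc {E : Finset (Finset V)} {a b c d : V}
    (h : IsBergeK4Core E a b c d) : IsBergeK4Core E a c b d := by
  obtain ⟨h1,h2,h3,h4,h5,h6, fab,fac,fad,fbc,fbd,fcd, m1,m2,m3,m4,m5,m6, nd,
    p1,p2,p3,p4,p5,p6,p7,p8,p9,p10,p11,p12⟩ := h
  refine ⟨h2, h1, h3, h4.symm, h6, h5, fac, fab, fad, fbc, fcd, fbd,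
    m2,m1,m3,m4,m6,m5, ?_, p3,p4,p1,p2,p5,p6,p8,p7,p11,p12,p9,p10⟩
  simp only [List.nodup_cons, List.mem_cons, List.mem_singleton, List.not_mem_nil,
    List.nodup_nil, not_or, and_true] at nd ⊢
  aesop

lemma core_swap_bd {E : Finset (Finset V)} {a b c d : V}
    (h : IsBergeK4Core E a b c d) : IsBergeK4Core E a d c b := by
  obtain ⟨h1,h2,h3,h4,h5,h6, fab,fac,fad,fbc,fbd,fcd, m1,m2,m3,m4,m5,m6, nd,
    p1,p2,p3,p4,p5,p6,p7,p8,p9,p10,p11,p12⟩ := h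
  refine ⟨h3, h2, h1, h6.symm, h5.symm, h4.symm, fad, fac, fab, fcd, fbd, fbc,
    m3,m2,m1,m6,m5,m4, ?_, p5,p6,p3,p4,p1,p2,p12,p11,p10,p9,p8,p7⟩
  simp only [List.nodup_cons, List.mem_cons, List.mem_singleton, List.not_mem_nil,
    List.nodup_nil, not_or, and_true] at nd ⊢
  aesop

lemma ne3 {x y z : V} (h : ({x, y, z} : Finset V).card = 3) :
    x ≠ y ∧ x ≠ z ∧ y ≠ z := by
  refine ⟨?_, ?_, ?_⟩ <;> intro he
  · have hsub : ({x, y, z} : Finset V) ⊆ {y, z} := by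
      intro t ht
      simp only [Finset.mem_insert, Finset.mem_singleton] at ht ⊢
      rcases ht with rfl | rfl | rfl <;> simp [he]
    have h1 := Finset.card_le_card hsub
    have h2 := Finset.card_insert_le y ({z} : Finset V)
    simp at h2; omega
  · have hsub : ({x, y, z} : Finset V) ⊆ {y, z} := by
      intro t ht
      simp only [Finset.mem_insert, Finset.mem_singleton] at ht ⊢
      rcases ht with rfl | rfl | rfl <;> simp [he]
    have h1 := Finset.card_le_card hsub
    have h2 := Finset.card_insert_le y ({z} : Finset V)
    simp at h2; omega
  · have hsub : ({x, y, z} : Finset V) ⊆ {x, z} := by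
      intro t ht
      simp only [Finset.mem_insert, Finset.mem_singleton] at ht ⊢
      rcases ht with rfl | rfl | rfl <;> simp [he]
    have h1 := Finset.card_le_card hsub
    have h2 := Finset.card_insert_le x ({z} : Finset V)
    simp at h2; omega
theorem stmt_17 [Fintype V] (E : Finset (Finset V)) (h3 : Is3Uniform E)
    (hfree : ¬ IsBergeK4 E) (a1 a2 a3 x1 : V) (h23 : a2 ≠ a3)
    (he1 : ({a1, a2, x1} : Finset V) ∈ E) (he2 : ({a1, a3, x1} : Finset V) ∈ E)
    (hd1 : hdeg E a1 = 2) (hd2 : hdeg E a2 = 2) (hd3 : hdeg E a3 = 2)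
    (hne : ({a1, a2, a3} : Finset V) ∉ E) :
    (∀ a b c d : V, IsBergeK4Core (insert ({a1, a2, a3} : Finset V) E) a b c d →
      a1 ∉ ({a, b, c, d} : Finset V)) ∧
    (IsSaturated E → GoodPair E a2 a3) := by
  obtain ⟨h12, h1x, h2x⟩ := ne3 (h3 _ he1)
  obtain ⟨h13, -, h3x⟩ := ne3 (h3 _ he2)
  set e0 : Finset V := {a1, a2, a3} with he0def
  set e1 : Finset V := {a1, a2, x1} with he1def
  set e2 : Finset V := {a1, a3, x1} with he2def
  set E' : Finset (Finset V) := insert e0 E with hE'def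
  have ha1e0 : a1 ∈ e0 := by simp [he0def]
  have ha1e1 : a1 ∈ e1 := by simp [he1def]
  have ha1e2 : a1 ∈ e2 := by simp [he2def]
  have ha2e1 : a2 ∈ e1 := by simp [he1def]
  have ha3e2 : a3 ∈ e2 := by simp [he2def]
  have he12 : e1 ≠ e2 := by
    intro h
    have : a2 ∈ e2 := h ▸ ha2e1
    simp only [he2def, Finset.mem_insert, Finset.mem_singleton] at this
    rcases this with h' | h' | h'
    exacts [h12 h'.symm, h23 h', h2x h']
  -- the edges of E through a1 are exactly e1, e2
  have hfilter1 : E.filter (fun e => a1 ∈ e) = {e1, e2} := by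
    refine (Finset.eq_of_subset_of_card_le ?_ ?_).symm
    · intro g hg
      simp only [Finset.mem_insert, Finset.mem_singleton] at hg
      rcases hg with rfl | rfl <;> simp [Finset.mem_filter, he1, he2, ha1e1, ha1e2]
    · have : ({e1, e2} : Finset (Finset V)).card = 2 := by
        rw [Finset.card_insert_of_notMem (by simp [he12]), Finset.card_singleton]
      have hfc : (E.filter (fun e => a1 ∈ e)).card = 2 := hd1
      omega
  have claimA : ∀ g ∈ E', a1 ∈ g → g = e0 ∨ g = e1 ∨ g = e2 := by
    intro g hg ha
    rcases Finset.mem_insert.mp hg with rfl | hgE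
    · exact Or.inl rfl
    · right
      have : g ∈ E.filter (fun e => a1 ∈ e) := Finset.mem_filter.mpr ⟨hgE, ha⟩
      rw [hfilter1] at this
      simpa using this
  have he0notE : e0 ∉ E := hne
  -- three distinct E-edges through a common vertex w of degree 2: impossible
  have contra : ∀ (w : V) (ew g1 g2 : Finset V), hdeg E w = 2 → ew ∈ E → w ∈ ew →
      a1 ∈ ew → g1 ∈ E → g2 ∈ E → w ∈ g1 → w ∈ g2 → g1 ≠ g2 → a1 ∉ g1 → a1 ∉ g2 →
      False := by
    intro w ew g1 g2 hdw hew hwew ha1ew hg1 hg2 hwg1 hwg2 hne12 hn1 hn2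
    have hsub : ({ew, g1, g2} : Finset (Finset V)) ⊆ E.filter (fun e => w ∈ e) := by
      intro t ht
      simp only [Finset.mem_insert, Finset.mem_singleton] at ht
      rcases ht with rfl | rfl | rfl <;> simp [Finset.mem_filter, hew, hg1, hg2, hwew, hwg1, hwg2]
    have hcard : ({ew, g1, g2} : Finset (Finset V)).card = 3 := by
      rw [Finset.card_insert_of_notMem, Finset.card_insert_of_notMem (by simp [hne12]),
        Finset.card_singleton]
      simp only [Finset.mem_insert, Finset.mem_singleton]
      push_neg
      constructor <;> rintro rfl <;> [exact hn1 ha1ew; exact hn2 ha1ew]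
    have hle := Finset.card_le_card hsub
    have hfc : (E.filter (fun e => w ∈ e)).card = 2 := hdw
    omega
  have toE : ∀ g : Finset V, g ∈ E' → a1 ∉ g → g ∈ E := by
    intro g hg hna
    refine (Finset.mem_insert.mp hg).resolve_left ?_
    rintro rfl; exact hna ha1e0
  -- a Berge-K4 in E' cannot have a1 as its first core vertex
  have key : ∀ b c d : V, ¬ IsBergeK4Core E' a1 b c d := by
    rintro b c d ⟨hab, hac, had, hbc, hbd, hcd, fab, fac, fad, fbc, fbd, fcd,
      m1, m2, m3, m4, m5, m6, nd, p1, p2, p3, p4, p5, p6, p7, p8, p9, p10, p11, p12⟩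
    simp only [List.nodup_cons, List.mem_cons, List.mem_singleton, List.not_mem_nil,
      List.nodup_nil, not_or, and_true, not_false_eq_true] at nd
    obtain ⟨⟨n12, n13, n14, n15, n16⟩, ⟨n23, n24, n25, n26⟩, ⟨n34, n35, n36⟩, ⟨n45, n46⟩, n56⟩ := nd
    have hT : ({e0, e1, e2} : Finset (Finset V)).card ≤ 3 := by
      have t1 := Finset.card_insert_le e0 ({e1, e2} : Finset (Finset V))
      have t2 := Finset.card_insert_le e1 ({e2} : Finset (Finset V))
      simp at t2; omega
    have hS : ∀ g ∈ E', a1 ∈ g → g = fab ∨ g = fac ∨ g = fad := by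
      intro g hg ha
      by_contra hcon
      push_neg at hcon
      obtain ⟨hc1, hc2, hc3⟩ := hcon
      have hsub : ({g, fab, fac, fad} : Finset (Finset V)) ⊆ {e0, e1, e2} := by
        intro t ht
        simp only [Finset.mem_insert, Finset.mem_singleton] at ht ⊢
        rcases ht with rfl | rfl | rfl | rfl
        exacts [claimA t hg ha, claimA t m1 p1, claimA t m2 p3, claimA t m3 p5]
      have hcard : ({g, fab, fac, fad} : Finset (Finset V)).card = 4 := by
        rw [Finset.card_insert_of_notMem (by simp [hc1, hc2, hc3]),
          Finset.card_insert_of_notMem (by simp [n12, n13]),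
          Finset.card_insert_of_notMem (by simp [n23]), Finset.card_singleton]
      have := Finset.card_le_card hsub
      omega
    have hn4 : a1 ∉ fbc := by
      intro ha
      rcases hS fbc m4 ha with h | h | h
      exacts [n14 h.symm, n24 h.symm, n34 h.symm]
    have hn5 : a1 ∉ fbd := by
      intro ha
      rcases hS fbd m5 ha with h | h | h
      exacts [n15 h.symm, n25 h.symm, n35 h.symm]
    have hn6 : a1 ∉ fcd := by
      intro ha
      rcases hS fcd m6 ha with h | h | h
      exacts [n16 h.symm, n26 h.symm, n36 h.symm]
    have he0E' : e0 ∈ E' := Finset.mem_insert_self _ _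
    rcases hS e0 he0E' ha1e0 with h | h | h
    · -- e0 is the (a1,b) edge, so b ∈ {a2,a3}
      have hb : b ∈ e0 := by rw [h]; exact p2
      simp only [he0def, Finset.mem_insert, Finset.mem_singleton] at hb
      rcases hb with hb | hb | hb
      · exact hab hb.symm
      · exact contra a2 e1 fbc fbd hd2 he1 ha2e1 ha1e1 (toE _ m4 hn4) (toE _ m5 hn5)
          (hb ▸ p7) (hb ▸ p9) n45 hn4 hn5
      · exact contra a3 e2 fbc fbd hd3 he2 ha3e2 ha1e2 (toE _ m4 hn4) (toE _ m5 hn5)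
          (hb ▸ p7) (hb ▸ p9) n45 hn4 hn5
    · have hc : c ∈ e0 := by rw [h]; exact p4
      simp only [he0def, Finset.mem_insert, Finset.mem_singleton] at hc
      rcases hc with hc | hc | hc
      · exact hac hc.symm
      · exact contra a2 e1 fbc fcd hd2 he1 ha2e1 ha1e1 (toE _ m4 hn4) (toE _ m6 hn6)
          (hc ▸ p8) (hc ▸ p11) n46 hn4 hn6
      · exact contra a3 e2 fbc fcd hd3 he2 ha3e2 ha1e2 (toE _ m4 hn4) (toE _ m6 hn6)
          (hc ▸ p8) (hc ▸ p11) n46 hn4 hn6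
    · have hd : d ∈ e0 := by rw [h]; exact p6
      simp only [he0def, Finset.mem_insert, Finset.mem_singleton] at hd
      rcases hd with hd | hd | hd
      · exact had hd.symm
      · exact contra a2 e1 fbd fcd hd2 he1 ha2e1 ha1e1 (toE _ m5 hn5) (toE _ m6 hn6)
          (hd ▸ p10) (hd ▸ p12) n56 hn5 hn6
      · exact contra a3 e2 fbd fcd hd3 he2 ha3e2 ha1e2 (toE _ m5 hn5) (toE _ m6 hn6)
          (hd ▸ p10) (hd ▸ p12) n56 hn5 hn6
  have part1 : ∀ a b c d : V, IsBergeK4Core E' a b c d →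
      a1 ∉ ({a, b, c, d} : Finset V) := by
    intro a b c d hcore hmem
    simp only [Finset.mem_insert, Finset.mem_singleton] at hmem
    rcases hmem with h | h | h | h <;> rw [← h] at hcore
    exacts [key _ _ _ hcore, key _ _ _ (core_swap_ab hcore),
      key _ _ _ (core_swap_ab (core_swap_bc hcore)),
      key _ _ _ (core_swap_ab (core_swap_bd hcore))]
  refine ⟨part1, ?_⟩
  intro hsat
  obtain ⟨-, -, hadd⟩ := hsat
  have hcard3 : e0.card = 3 := by
    rw [he0def, Finset.card_insert_of_notMem (by simp [h12, h13]),
      Finset.card_insert_of_notMem (by simp [h23]), Finset.card_singleton]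
  obtain ⟨a, b, c, d, hcore⟩ := hadd e0 hcard3 hne
  have hnotin := part1 a b c d hcore
  simp only [Finset.mem_insert, Finset.mem_singleton, not_or] at hnotin
  obtain ⟨q1, q2, q3, q4⟩ := hnotin
  -- build a GoodPair witness from a core (a,b,c,d) in E' whose (a,b)-edge is e0
  have build : ∀ (a b c d : V) (gac gad gbc gbd gcd : Finset V),
      a1 ≠ a → a1 ≠ b → a ≠ b → a ≠ c → a ≠ d → b ≠ c → b ≠ d → c ≠ d →
      gac ∈ E → gad ∈ E → gbc ∈ E → gbd ∈ E → gcd ∈ E →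
      ([gac, gad, gbc, gbd, gcd] : List (Finset V)).Nodup →
      a ∈ e0 → b ∈ e0 →
      a ∈ gac → c ∈ gac → a ∈ gad → d ∈ gad → b ∈ gbc → c ∈ gbc →
      b ∈ gbd → d ∈ gbd → c ∈ gcd → d ∈ gcd → GoodPair E a2 a3 := by
    intro a b c d gac gad gbc gbd gcd w1 w2 w3 w4 w5 w6 w7 w8
      k1 k2 k3 k4 k5 knd r1 r2 r3 r4 r5 r6 r7 r8 r9 r10 r11 r12
    simp only [he0def, Finset.mem_insert, Finset.mem_singleton] at r1 r2
    simp only [List.nodup_cons, List.mem_cons, List.mem_singleton, List.not_mem_nil,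
      List.nodup_nil, not_or, and_true, not_false_eq_true] at knd
    obtain ⟨⟨k12, k13, k14, k15⟩, ⟨k23, k24, k25⟩, ⟨k34, k35⟩, k45⟩ := knd
    rcases r1 with h | h | h
    · exact absurd h.symm w1
    · -- a = a2, so b = a3
      rcases r2 with h' | h' | h'
      · exact absurd h'.symm w2
      · exact absurd (h.trans h'.symm) w3
      · refine ⟨c, d, h23, h ▸ w4, h ▸ w5, h' ▸ w6, h' ▸ w7, w8, gac, gad, gbc, gbd, gcd,
          k1, k2, k3, k4, k5, ?_, h ▸ r3, r4, h ▸ r5, r6, h' ▸ r7, r8, h' ▸ r9, r10, r11, r12⟩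
        simp only [List.nodup_cons, List.mem_cons, List.mem_singleton, List.not_mem_nil,
          List.nodup_nil, not_or, and_true, not_false_eq_true]
        exact ⟨⟨k12, k13, k14, k15⟩, ⟨k23, k24, k25⟩, ⟨k34, k35⟩, k45⟩
    · -- a = a3, so b = a2
      rcases r2 with h' | h' | h'
      · exact absurd h'.symm w2
      · refine ⟨c, d, h23, h' ▸ w6, h' ▸ w7, h ▸ w4, h ▸ w5, w8, gbc, gbd, gac, gad, gcd,
          k3, k4, k1, k2, k5, ?_, h' ▸ r7, r8, h' ▸ r9, r10, h ▸ r3, r4, h ▸ r5, r6, r11, r12⟩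
        simp only [List.nodup_cons, List.mem_cons, List.mem_singleton, List.not_mem_nil,
          List.nodup_nil, not_or, and_true, not_false_eq_true]
        exact ⟨⟨k34, fun hh => k13 hh.symm, fun hh => k23 hh.symm, k35⟩,
          ⟨fun hh => k14 hh.symm, fun hh => k24 hh.symm, k45⟩, ⟨k12, k15⟩, k25⟩
      · exact absurd (h.trans h'.symm) w3
  obtain ⟨hab, hac, had, hbc, hbd, hcd, fab, fac, fad, fbc, fbd, fcd,
    m1, m2, m3, m4, m5, m6, nd, p1, p2, p3, p4, p5, p6, p7, p8, p9, p10, p11, p12⟩ := hcore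
  have nd' := nd
  simp only [List.nodup_cons, List.mem_cons, List.mem_singleton, List.not_mem_nil,
    List.nodup_nil, not_or, and_true, not_false_eq_true] at nd'
  obtain ⟨⟨n12, n13, n14, n15, n16⟩, ⟨n23, n24, n25, n26⟩, ⟨n34, n35, n36⟩, ⟨n45, n46⟩, n56⟩ := nd'
  have toE' : ∀ g : Finset V, g ∈ E' → g ≠ e0 → g ∈ E :=
    fun g hg h => (Finset.mem_insert.mp hg).resolve_left h
  by_cases hq1 : fab = e0
  · subst hq1
    refine build a b c d fac fad fbc fbd fcd q1 q2
      hab hac had hbc hbd hcd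
      (toE' _ m2 (fun h => n12 h.symm)) (toE' _ m3 (fun h => n13 h.symm))
      (toE' _ m4 (fun h => n14 h.symm)) (toE' _ m5 (fun h => n15 h.symm))
      (toE' _ m6 (fun h => n16 h.symm)) ?_ p1 p2 p3 p4 p5 p6 p7 p8 p9 p10 p11 p12
    simp only [List.nodup_cons, List.mem_cons, List.mem_singleton, List.not_mem_nil,
      List.nodup_nil, not_or, and_true, not_false_eq_true]
    exact ⟨⟨n23, n24, n25, n26⟩, ⟨n34, n35, n36⟩, ⟨n45, n46⟩, n56⟩
  by_cases hq2 : fac = e0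
  · subst hq2
    refine build a c b d fab fad fbc fcd fbd q1 q3
      hac hab had hbc.symm hcd hbd
      (toE' _ m1 (fun h => n12 h)) (toE' _ m3 (fun h => n23 h.symm))
      (toE' _ m4 (fun h => n24 h.symm)) (toE' _ m6 (fun h => n26 h.symm))
      (toE' _ m5 (fun h => n25 h.symm)) ?_ p3 p4 p1 p2 p5 p6 p8 p7 p11 p12 p9 p10
    simp only [List.nodup_cons, List.mem_cons, List.mem_singleton, List.not_mem_nil,
      List.nodup_nil, not_or, and_true, not_false_eq_true]
    exact ⟨⟨n13, n14, n16, n15⟩, ⟨n34, n36, n35⟩, ⟨n46, n45⟩, fun h => n56 h.symm⟩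
  by_cases hq3 : fad = e0
  · subst hq3
    refine build a d b c fab fac fbd fcd fbc q1 q4
      had hab hac hbd.symm hcd.symm hbc
      (toE' _ m1 (fun h => n13 h)) (toE' _ m2 (fun h => n23 h))
      (toE' _ m5 (fun h => n35 h.symm)) (toE' _ m6 (fun h => n36 h.symm))
      (toE' _ m4 (fun h => n34 h.symm)) ?_ p5 p6 p1 p2 p3 p4 p10 p9 p12 p11 p7 p8
    simp only [List.nodup_cons, List.mem_cons, List.mem_singleton, List.not_mem_nil,
      List.nodup_nil, not_or, and_true, not_false_eq_true]
    exact ⟨⟨n12, n15, n16, n14⟩, ⟨n25, n26, n24⟩, ⟨n56, fun h => n45 h.symm⟩,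
      fun h => n46 h.symm⟩
  by_cases hq4 : fbc = e0
  · subst hq4
    refine build b c a d fab fbd fac fcd fad q2 q3
      hbc hab.symm hbd hac.symm hcd had
      (toE' _ m1 (fun h => n14 h)) (toE' _ m5 (fun h => n45 h.symm))
      (toE' _ m2 (fun h => n24 h)) (toE' _ m6 (fun h => n46 h.symm))
      (toE' _ m3 (fun h => n34 h)) ?_ p7 p8 p2 p1 p9 p10 p4 p3 p11 p12 p5 p6
    simp only [List.nodup_cons, List.mem_cons, List.mem_singleton, List.not_mem_nil,
      List.nodup_nil, not_or, and_true, not_false_eq_true]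
    exact ⟨⟨n15, n12, n16, n13⟩, ⟨fun h => n25 h.symm, n56, fun h => n35 h.symm⟩,
      ⟨n26, n23⟩, fun h => n36 h.symm⟩
  by_cases hq5 : fbd = e0
  · subst hq5
    refine build b d a c fab fbc fad fcd fac q2 q4
      hbd hab.symm hbc had.symm hcd.symm hac
      (toE' _ m1 (fun h => n15 h)) (toE' _ m4 (fun h => n45 h))
      (toE' _ m3 (fun h => n35 h)) (toE' _ m6 (fun h => n56 h.symm))
      (toE' _ m2 (fun h => n25 h)) ?_ p9 p10 p2 p1 p7 p8 p6 p5 p12 p11 p3 p4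
    simp only [List.nodup_cons, List.mem_cons, List.mem_singleton, List.not_mem_nil,
      List.nodup_nil, not_or, and_true, not_false_eq_true]
    exact ⟨⟨n14, n13, n16, n12⟩, ⟨fun h => n34 h.symm, n46, fun h => n24 h.symm⟩,
      ⟨n36, fun h => n23 h.symm⟩, fun h => n26 h.symm⟩
  by_cases hq6 : fcd = e0
  · subst hq6
    refine build c d a b fac fbc fad fbd fab q3 q4
      hcd hac.symm hbc.symm had.symm hbd.symm hab
      (toE' _ m2 (fun h => n26 h)) (toE' _ m4 (fun h => n46 h))
      (toE' _ m3 (fun h => n36 h)) (toE' _ m5 (fun h => n56 h))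
      (toE' _ m1 (fun h => n16 h)) ?_ p11 p12 p4 p3 p8 p7 p6 p5 p10 p9 p1 p2
    simp only [List.nodup_cons, List.mem_cons, List.mem_singleton, List.not_mem_nil,
      List.nodup_nil, not_or, and_true, not_false_eq_true]
    exact ⟨⟨n24, n23, n25, fun h => n12 h.symm⟩, ⟨fun h => n34 h.symm, n45, fun h => n14 h.symm⟩,
      ⟨n35, fun h => n13 h.symm⟩, fun h => n15 h.symm⟩
  · exact absurd ⟨a, b, c, d, hab, hac, had, hbc, hbd, hcd, fab, fac, fad, fbc, fbd, fcd,
      toE' _ m1 hq1, toE' _ m2 hq2, toE' _ m3 hq3, toE' _ m4 hq4, toE' _ m5 hq5,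
      toE' _ m6 hq6, nd, p1, p2, p3, p4, p5, p6, p7, p8, p9, p10, p11, p12⟩ hfree
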